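/- arXiv:2509.05129 — 3 statements merged into one kernel-verified Lean document; each statement's English description precedes it below -/
import Mathlib

section
/- If v is a cut vertex separating s and t into different connected components of G \ {v}, then the resistance distance satisfies r(s,t) = r(s,v) + r(v,t). -/
open Matrix

open scoped Classical in
/-- Moore-Penrose pseudoinverse of a real matrix (chosen via the Penrose conditions). -/
noncomputable def matPinv {m : Type*} [Fintype m] (A : Matrix m m ℝ) : Matrix m m ℝ :=
  if h : ∃ B, A * B * A = A ∧ B * A * B = B ∧ (A * B)ᵀ = A * B ∧ (B * A)ᵀ = B * A
  then h.choose else 0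

/-- Resistance distance r(s,t) = (e_s - e_t)ᵀ L† (e_s - e_t). -/
noncomputable def rdist {n : ℕ} (G : SimpleGraph (Fin n)) [DecidableRel G.Adj]
    (s t : Fin n) : ℝ :=
  (Pi.single s 1 - Pi.single t 1 : Fin n → ℝ) ⬝ᵥ
    (matPinv (G.lapMatrix ℝ) *ᵥ (Pi.single s 1 - Pi.single t 1))

/-- Every real symmetric (Hermitian) matrix has a Moore-Penrose pseudoinverse. -/
lemma exists_pinv {m : Type*} [Fintype m] [DecidableEq m] {A : Matrix m m ℝ}
    (hA : A.IsHermitian) :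
    ∃ B, A * B * A = A ∧ B * A * B = B ∧ (A * B)ᵀ = A * B ∧ (B * A)ᵀ = B * A := by
  set U : Matrix m m ℝ := (hA.eigenvectorUnitary : Matrix m m ℝ) with hU
  have hU2 : star U * U = 1 := mem_unitaryGroup_iff'.mp hA.eigenvectorUnitary.2
  have hU1 : U * star U = 1 := mem_unitaryGroup_iff.mp hA.eigenvectorUnitary.2
  set e : m → ℝ := hA.eigenvalues with he
  have hAeq : A = U * diagonal e * star U := by
    simpa using hA.spectral_theorem
  have hmul : ∀ X Y : Matrix m m ℝ,
      (U * X * star U) * (U * Y * star U) = U * (X * Y) * star U := by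
    intro X Y
    calc (U * X * star U) * (U * Y * star U)
        = U * X * (star U * U) * Y * star U := by noncomm_ring
      _ = U * (X * Y) * star U := by rw [hU2]; noncomm_ring
  refine ⟨U * diagonal (fun i => (e i)⁻¹) * star U, ?_, ?_, ?_, ?_⟩
  · rw [hAeq, hmul, hmul, diagonal_mul_diagonal, diagonal_mul_diagonal]
    congr 2
    ext i
    by_cases h : e i = 0 <;> field_simp [h]
  · rw [hAeq, hmul, hmul, diagonal_mul_diagonal, diagonal_mul_diagonal]
    congr 2
    ext i
    by_cases h : e i = 0 <;> field_simp [h]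
  · rw [hAeq, hmul, diagonal_mul_diagonal]
    rw [show ∀ X : Matrix m m ℝ, Xᵀ = Xᴴ from
      fun X => (conjTranspose_eq_transpose_of_trivial X).symm]
    simp [conjTranspose_mul, Matrix.mul_assoc, diagonal_conjTranspose,
      Matrix.star_eq_conjTranspose, conjTranspose_eq_transpose_of_trivial]
  · rw [hAeq, hmul, diagonal_mul_diagonal]
    rw [show ∀ X : Matrix m m ℝ, Xᵀ = Xᴴ from
      fun X => (conjTranspose_eq_transpose_of_trivial X).symm]
    simp [conjTranspose_mul, Matrix.mul_assoc, diagonal_conjTranspose,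
      Matrix.star_eq_conjTranspose, conjTranspose_eq_transpose_of_trivial]

lemma matPinv_spec {m : Type*} [Fintype m] (A : Matrix m m ℝ)
    (h : ∃ B, A * B * A = A ∧ B * A * B = B ∧ (A * B)ᵀ = A * B ∧ (B * A)ᵀ = B * A) :
    A * matPinv A * A = A ∧ matPinv A * A * matPinv A = matPinv A ∧
      (A * matPinv A)ᵀ = A * matPinv A ∧ (matPinv A * A)ᵀ = matPinv A * A := by
  rw [matPinv, dif_pos h]
  exact h.choose_spec

/-- On a connected graph, `L L†` fixes every vector whose coordinates sum to zero. -/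
lemma lap_pinv_proj {n : ℕ} (G : SimpleGraph (Fin n)) [DecidableRel G.Adj]
    (hG : G.Connected) (s0 : Fin n)
    (hpen : G.lapMatrix ℝ * matPinv (G.lapMatrix ℝ) * G.lapMatrix ℝ = G.lapMatrix ℝ)
    (hsymP : (G.lapMatrix ℝ * matPinv (G.lapMatrix ℝ))ᵀ
      = G.lapMatrix ℝ * matPinv (G.lapMatrix ℝ))
    (w : Fin n → ℝ) (hw : ∑ i, w i = 0) :
    G.lapMatrix ℝ *ᵥ (matPinv (G.lapMatrix ℝ) *ᵥ w) = w := by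
  classical
  set L := G.lapMatrix ℝ with hL
  set M : Matrix (Fin n) (Fin n) ℝ := 1 - L * matPinv L with hM
  have hsymL : ∀ a b, L a b = L b a := fun a b =>
    (congrFun (congrFun (G.isSymm_lapMatrix (R := ℝ)) a) b).symm
  have hML : M * L = 0 := by
    rw [hM, Matrix.sub_mul, Matrix.one_mul, hpen, sub_self]
  have hMsym : Mᵀ = M := by
    rw [hM, transpose_sub, transpose_one, hsymP]
  have hcol : ∀ i j k : Fin n, M i j = M k j := by
    intro i j k
    have h0 : L *ᵥ (fun k => M j k) = 0 := by
      ext i'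
      have h2 := congrFun (congrFun hML j) i'
      rw [Matrix.mul_apply] at h2
      calc (L *ᵥ fun k => M j k) i' = ∑ k, L i' k * M j k := rfl
        _ = ∑ k, M j k * L k i' := Finset.sum_congr rfl fun k _ => by
              rw [hsymL i' k, mul_comm]
        _ = 0 := h2
    have h1 : Matrix.toLin' L (fun k => M j k) = 0 := by
      rw [Matrix.toLin'_apply]; exact h0
    have h2 := (G.lapMatrix_mulVec_eq_zero_iff_forall_reachable (x := fun k => M j k)).mp
      (by rw [Matrix.toLin'_apply] at h1; exact h1)
    have h3 : M j i = M j k := h2 i k (hG.preconnected i k)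
    have hms : ∀ a b : Fin n, M a b = M b a := fun a b => by
      have h4 := congrFun (congrFun hMsym b) a
      rwa [Matrix.transpose_apply] at h4
    rw [hms i j, hms k j]
    exact h3
  have hconst : ∀ i j : Fin n, M i j = M s0 s0 := by
    intro i j
    calc M i j = M s0 j := hcol i j s0
      _ = M j s0 := by
            have h4 := congrFun (congrFun hMsym j) s0
            rwa [Matrix.transpose_apply] at h4
      _ = M s0 s0 := hcol j s0 s0
  have hMw : M *ᵥ w = 0 := by
    ext i
    have : (M *ᵥ w) i = ∑ j, M s0 s0 * w j := by
      simp only [Matrix.mulVec, dotProduct]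
      exact Finset.sum_congr rfl fun j _ => by rw [hconst i j]
    rw [this, ← Finset.mul_sum, hw, mul_zero]
    rfl
  have := congrArg (· *ᵥ w) hM.symm
  simp only [Matrix.sub_mulVec, Matrix.one_mulVec] at this
  rw [hMw] at this
  rw [mulVec_mulVec]
  rw [sub_eq_zero] at this
  exact this.symm

lemma sum_lap_mulVec {n : ℕ} (G : SimpleGraph (Fin n)) [DecidableRel G.Adj]
    (z : Fin n → ℝ) : ∑ u, (G.lapMatrix ℝ *ᵥ z) u = 0 := by
  classical
  have h1 : ∑ u, (G.lapMatrix ℝ *ᵥ z) u = (fun _ => (1:ℝ)) ⬝ᵥ (G.lapMatrix ℝ *ᵥ z) := by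
    simp [dotProduct]
  rw [h1, dotProduct_mulVec]
  have h2 : (fun _ => (1:ℝ)) ᵥ* (G.lapMatrix ℝ) = 0 := by
    have hsym : (G.lapMatrix ℝ)ᵀ = G.lapMatrix ℝ := G.isSymm_lapMatrix (R := ℝ)
    rw [← hsym, vecMul_transpose, G.lapMatrix_mulVec_const_eq_zero]
  rw [h2, zero_dotProduct]

theorem resistance_cut_vertex {n : ℕ} (G : SimpleGraph (Fin n))
    [DecidableRel G.Adj] (hG : G.Connected) (s t v : Fin n)
    (hs : s ≠ v) (ht : t ≠ v)
    (hcut : ¬ (G.induce {u : Fin n | u ≠ v}).Reachable ⟨s, hs⟩ ⟨t, ht⟩) :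
    rdist G s t = rdist G s v + rdist G v t := by
  classical
  obtain ⟨hp1, hp2, hp3, hp4⟩ :=
    matPinv_spec (G.lapMatrix ℝ) (exists_pinv (G.posSemidef_lapMatrix ℝ).1)
  have hproj : ∀ w : Fin n → ℝ, ∑ i, w i = 0 →
      G.lapMatrix ℝ *ᵥ (matPinv (G.lapMatrix ℝ) *ᵥ w) = w :=
    fun w hw => lap_pinv_proj G hG s hp1 hp3 w hw
  have hsum0 : ∀ a b : Fin n,
      ∑ i, (Pi.single a 1 - Pi.single b 1 : Fin n → ℝ) i = 0 := by
    intro a b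
    simp [Finset.sum_sub_distrib]
  -- generic computation of rdist from a potential
  have rcalc : ∀ (a b : Fin n) (g : Fin n → ℝ),
      G.lapMatrix ℝ *ᵥ g = (Pi.single a 1 - Pi.single b 1 : Fin n → ℝ) →
      rdist G a b = g a - g b := by
    intro a b g hg
    have hsymL : (G.lapMatrix ℝ)ᵀ = G.lapMatrix ℝ := G.isSymm_lapMatrix (R := ℝ)
    have hvm : ∀ u : Fin n → ℝ, u ᵥ* G.lapMatrix ℝ = G.lapMatrix ℝ *ᵥ u := by
      intro u
      conv_lhs => rw [← hsymL]
      rw [vecMul_transpose]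
    set dab : Fin n → ℝ := Pi.single a 1 - Pi.single b 1 with hdab
    calc rdist G a b = dab ⬝ᵥ (matPinv (G.lapMatrix ℝ) *ᵥ dab) := rfl
      _ = (G.lapMatrix ℝ *ᵥ g) ⬝ᵥ (matPinv (G.lapMatrix ℝ) *ᵥ dab) := by rw [hg]
      _ = (matPinv (G.lapMatrix ℝ) *ᵥ dab) ⬝ᵥ (G.lapMatrix ℝ *ᵥ g) := dotProduct_comm _ _
      _ = ((matPinv (G.lapMatrix ℝ) *ᵥ dab) ᵥ* G.lapMatrix ℝ) ⬝ᵥ g := dotProduct_mulVec _ _ _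
      _ = (G.lapMatrix ℝ *ᵥ (matPinv (G.lapMatrix ℝ) *ᵥ dab)) ⬝ᵥ g := by
            rw [hvm]
      _ = dab ⬝ᵥ g := by rw [hproj dab (hsum0 a b)]
      _ = g a - g b := by rw [hdab, sub_dotProduct, single_dotProduct, single_dotProduct,
            one_mul, one_mul]
  -- the vector x with Lx = e_s - e_t
  set d : Fin n → ℝ := Pi.single s 1 - Pi.single t 1 with hd
  set x : Fin n → ℝ := matPinv (G.lapMatrix ℝ) *ᵥ d with hx
  have hLx : G.lapMatrix ℝ *ᵥ x = d := hproj d (hsum0 s t)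
  -- the component of s in G - v
  set S : Set (Fin n) := {u : Fin n | u ≠ v} with hS
  set Rs : Fin n → Prop :=
    fun u => ∃ h : u ≠ v, (G.induce S).Reachable ⟨s, hs⟩ ⟨u, h⟩ with hRsdef
  have hRs_s : Rs s := ⟨hs, SimpleGraph.Reachable.refl _⟩
  have hRs_t : ¬ Rs t := by rintro ⟨h, hr⟩; exact hcut hr
  have hRs_v : ¬ Rs v := by rintro ⟨h, -⟩; exact h rfl
  have hstep : ∀ u w : Fin n, Rs u → G.Adj u w → w ≠ v → Rs w := by
    rintro u w ⟨hu, hr⟩ hadj hw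
    refine ⟨hw, hr.trans (SimpleGraph.Adj.reachable ?_)⟩
    simpa [SimpleGraph.comap_adj] using hadj
  -- the cut potential y
  set y : Fin n → ℝ := fun u => if Rs u then x u else x v with hy
  have hys : y s = x s := if_pos hRs_s
  have hyv : y v = x v := if_neg hRs_v
  have hyt : y t = x v := if_neg hRs_t
  have hy_pt : ∀ u : Fin n, u ≠ v →
      (G.lapMatrix ℝ *ᵥ y) u = (Pi.single s 1 - Pi.single v 1 : Fin n → ℝ) u := by
    intro u hu
    by_cases hru : Rs u
    · have e1 : (G.lapMatrix ℝ *ᵥ y) u = (G.lapMatrix ℝ *ᵥ x) u := by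
        rw [SimpleGraph.lapMatrix_mulVec_apply, SimpleGraph.lapMatrix_mulVec_apply]
        have hyu : y u = x u := if_pos hru
        rw [hyu]
        congr 1
        refine Finset.sum_congr rfl fun w hwmem => ?_
        rw [SimpleGraph.mem_neighborFinset] at hwmem
        by_cases hwv : w = v
        · subst hwv; exact hyv
        · exact if_pos (hstep u w hru hwmem hwv)
      have hut : u ≠ t := fun h => hRs_t (h ▸ hru)
      rw [e1, hLx]
      by_cases hus : u = s
      · subst hus
        simp [hd, Pi.single_apply, hut, hu]
      · simp [hd, Pi.single_apply, hus, hut, hu]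
    · have e0 : (G.lapMatrix ℝ *ᵥ y) u = 0 := by
        rw [SimpleGraph.lapMatrix_mulVec_apply]
        have hyu : y u = x v := if_neg hru
        have hnb : ∀ w ∈ G.neighborFinset u, y w = x v := by
          intro w hwmem
          rw [SimpleGraph.mem_neighborFinset] at hwmem
          by_cases hwv : w = v
          · subst hwv; exact hyv
          · exact if_neg (fun h => hru (hstep w u h hwmem.symm hu))
        rw [hyu, Finset.sum_congr rfl hnb, Finset.sum_const, nsmul_eq_mul]
        rw [SimpleGraph.degree]
        ring
      have hus : u ≠ s := fun h => hru (h ▸ hRs_s)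
      rw [e0]
      simp [Pi.single_apply, hus, hu]
  -- extend pointwise equality off v to full equality using zero sums
  have hLy : G.lapMatrix ℝ *ᵥ y = (Pi.single s 1 - Pi.single v 1 : Fin n → ℝ) := by
    funext u
    by_cases huv : u = v
    · subst huv
      have h1 : ∑ w, (G.lapMatrix ℝ *ᵥ y) w = 0 := sum_lap_mulVec G y
      have h2 : ∑ w, (Pi.single s 1 - Pi.single u 1 : Fin n → ℝ) w = 0 := hsum0 s u
      rw [← Finset.add_sum_erase _ _ (Finset.mem_univ u)] at h1 h2
      have h3 : ∑ w ∈ Finset.univ.erase u, (G.lapMatrix ℝ *ᵥ y) w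
          = ∑ w ∈ Finset.univ.erase u, (Pi.single s 1 - Pi.single u 1 : Fin n → ℝ) w :=
        Finset.sum_congr rfl fun w hw => hy_pt w (Finset.ne_of_mem_erase hw)
      rw [h3] at h1
      linarith
    · exact hy_pt u huv
  -- the mirrored potential y'
  set y' : Fin n → ℝ := fun u => x u + x v - y u with hy'
  have hLy' : G.lapMatrix ℝ *ᵥ y' = (Pi.single v 1 - Pi.single t 1 : Fin n → ℝ) := by
    have hconst : G.lapMatrix ℝ *ᵥ (fun _ => x v) = 0 := by
      have h2 : (fun (_ : Fin n) => x v) = x v • (fun _ => (1:ℝ)) := by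
        funext u; simp
      rw [h2, Matrix.mulVec_smul, G.lapMatrix_mulVec_const_eq_zero, smul_zero]
    have hy'eq : y' = (x + (fun _ => x v)) - y := by
      funext u; simp [hy']
    rw [hy'eq, Matrix.mulVec_sub, Matrix.mulVec_add, hLx, hconst, hLy]
    funext u
    simp [hd, Pi.single_apply]
  -- assemble
  have r1 : rdist G s t = x s - x t := rcalc s t x hLx
  have r2 : rdist G s v = y s - y v := rcalc s v y hLy
  have r3 : rdist G v t = y' v - y' t := rcalc v t y' hLy'
  have hyv' : y' v = x v := by simp [hy', hyv]
  have hyt' : y' t = x t := by simp [hy', hyt]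
  rw [r1, r2, r3, hys, hyv, hyv', hyt']
  ring
end

section
/- Let v be a cut vertex whose removal separates s from t. Then the (s,t) entry of L_v^{-1} is zero, where L_v is the Laplacian submatrix with row and column v removed. -/
open Matrix

theorem grounded_inverse_entry_zero_of_cut_vertex {n : ℕ} (G : SimpleGraph (Fin n))
    [DecidableRel G.Adj] (hG : G.Connected) (s t v : Fin n)
    (hs : s ≠ v) (ht : t ≠ v)
    (hcut : ¬ (G.induce {u : Fin n | u ≠ v}).Reachable ⟨s, hs⟩ ⟨t, ht⟩) :
    let Lv : Matrix {i : Fin n // i ≠ v} {i : Fin n // i ≠ v} ℝ :=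
      (G.lapMatrix ℝ).submatrix Subtype.val Subtype.val
    Lv⁻¹ ⟨s, hs⟩ ⟨t, ht⟩ = 0 := by
  intro Lv
  classical
  by_cases hdet : IsUnit Lv.det
  · -- block structure
    set P : {i : Fin n // i ≠ v} → Prop :=
      fun i => (G.induce {u : Fin n | u ≠ v}).Reachable ⟨s, hs⟩ i with hP
    set b : {i : Fin n // i ≠ v} → ℕ := fun i => if P i then 1 else 0 with hb
    have hBT : Lv.BlockTriangular b := by
      intro i j hij
      have hPi : P i := by
        by_contra h
        simp [hb, h] at hij
      have hPj : ¬ P j := by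
        by_contra h
        simp [hb, hPi, h] at hij
      have hne : i.val ≠ j.val := by
        intro h
        exact hPj (by rwa [show j = i from Subtype.ext h.symm])
      have hadj : ¬ G.Adj i.val j.val := by
        intro hadj
        apply hPj
        exact hPi.trans ((SimpleGraph.Adj.reachable
          (by exact hadj : (G.induce {u : Fin n | u ≠ v}).Adj i j)))
      show (G.lapMatrix ℝ) i.val j.val = 0
      simp [SimpleGraph.lapMatrix, SimpleGraph.degMatrix, Matrix.diagonal_apply_ne _ hne, hadj]
    have : Invertible Lv := Lv.invertibleOfIsUnitDet hdet
    have hBTinv : Lv⁻¹.BlockTriangular b :=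
      Matrix.blockTriangular_inv_of_blockTriangular hBT
    apply hBTinv
    have hPs : P ⟨s, hs⟩ := SimpleGraph.Reachable.refl _
    have hPt : ¬ P ⟨t, ht⟩ := hcut
    simp [hb, hPs, hPt]
  · simp [Matrix.nonsing_inv_apply_not_isUnit _ hdet]
end

section
/- For a connected graph G with fixed vertex v, all entries of L_v^{-1} are nonnegative, and the diagonal entry (L_v^{-1})_{ss} is the maximal entry in row s: (L_v^{-1})_{st} ≤ min((L_v^{-1})_{ss}, (L_v^{-1})_{tt}) for all s,t. -/
open Matrix Finset

section aux

variable {n : ℕ} {v : Fin n}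

/-- Summing over the subtype `{i // i ≠ v}` versus summing over everything. -/
lemma sum_subtype_ne (v : Fin n) (f : Fin n → ℝ) :
    ∑ i : {i : Fin n // i ≠ v}, f i.val = (∑ i, f i) - f v := by
  have h1 : ∑ i ∈ Finset.univ.erase v, f i = ∑ i : {i : Fin n // i ≠ v}, f i.val :=
    Finset.sum_subtype (p := fun i => i ≠ v) (Finset.univ.erase v)
      (fun i => by simp) f
  have h2 : f v + ∑ i ∈ Finset.univ.erase v, f i = ∑ i, f i :=
    Finset.add_sum_erase _ f (Finset.mem_univ v)
  rw [← h1]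
  linarith

variable {m : Type*} [Fintype m] [DecidableEq m]

/-- The inverse column of a Stieltjes matrix (positive definite with nonpositive
off-diagonal entries) is entrywise nonnegative. -/
lemma stieltjes_col_nonneg {A : Matrix m m ℝ} (hPD : A.PosDef)
    (hoff : ∀ i j, i ≠ j → A i j ≤ 0) {x : m → ℝ} {t : m}
    (hx : A *ᵥ x = Pi.single t 1) : ∀ i, 0 ≤ x i := by
  classical
  set y : m → ℝ := fun i => max (-(x i)) 0 with hy
  set z : m → ℝ := fun i => max (x i) 0 with hz
  have hyz : ∀ i, y i * z i = 0 := by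
    intro i
    rcases le_total (x i) 0 with h | h
    · have hzi : z i = 0 := max_eq_right h
      rw [hzi, mul_zero]
    · have hyi : y i = 0 := max_eq_right (neg_nonpos.mpr h)
      rw [hyi, zero_mul]
  have hynn : ∀ i, 0 ≤ y i := fun i => le_max_right _ _
  have hznn : ∀ i, 0 ≤ z i := fun i => le_max_right _ _
  have hxzy : x = z - y := by
    funext i
    rcases le_total (x i) 0 with h | h
    · simp [hy, hz, max_eq_left h, max_eq_right (neg_nonneg.mpr h)]
    · simp [hy, hz, max_eq_right h, max_eq_left (neg_nonpos.mpr h)]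
  have h1 : y ⬝ᵥ (A *ᵥ x) = y t := by
    rw [hx]
    simp [dotProduct, Pi.single_apply, mul_ite, Finset.sum_ite_eq']
  have h3 : y ⬝ᵥ (A *ᵥ z) ≤ 0 := by
    rw [dotProduct]
    refine Finset.sum_nonpos fun i _ => ?_
    rw [mulVec, dotProduct, Finset.mul_sum]
    refine Finset.sum_nonpos fun j _ => ?_
    by_cases hij : i = j
    · subst hij
      rw [show y i * (A i i * z i) = A i i * (y i * z i) from by ring, hyz i, mul_zero]
    · rw [show y i * (A i j * z j) = A i j * (y i * z j) from by ring]
      exact mul_nonpos_iff.mpr (Or.inr ⟨hoff i j hij, mul_nonneg (hynn i) (hznn j)⟩)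
  have h2 : y ⬝ᵥ (A *ᵥ x) = y ⬝ᵥ (A *ᵥ z) - y ⬝ᵥ (A *ᵥ y) := by
    rw [hxzy, mulVec_sub, dotProduct_sub]
  have hyAy : y ⬝ᵥ (A *ᵥ y) ≤ 0 := by
    have hyt : 0 ≤ y t := hynn t
    linarith [h1, h2, h3]
  have hy0 : y = 0 := by
    by_contra h
    have := hPD.dotProduct_mulVec_pos h
    rw [star_trivial] at this
    linarith
  intro i
  have : x i = z i - y i := by rw [hxzy]; rfl
  rw [this, hy0]
  simpa using hznn i

/-- For a Stieltjes matrix with nonnegative row sums, the diagonal entry of the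
inverse dominates the rest of its column. -/
lemma stieltjes_col_le_diag {A : Matrix m m ℝ} (hPD : A.PosDef)
    (hoff : ∀ i j, i ≠ j → A i j ≤ 0) (hrow : ∀ i, 0 ≤ ∑ j, A i j)
    {x : m → ℝ} {t : m} (hx : A *ᵥ x = Pi.single t 1) (hxt : 0 ≤ x t) :
    ∀ i, x i ≤ x t := by
  classical
  obtain ⟨c, hc⟩ : ∃ c, x t = c := ⟨x t, rfl⟩
  rw [hc] at hxt
  suffices h : ∀ i, x i ≤ c by intro i; rw [hc]; exact h i
  set w : m → ℝ := fun i => max (x i - c) 0 with hw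
  set u : m → ℝ := fun i => max (c - x i) 0 with hu
  have hwnn : ∀ i, 0 ≤ w i := fun i => le_max_right _ _
  have hunn : ∀ i, 0 ≤ u i := fun i => le_max_right _ _
  have hwu : ∀ i, w i * u i = 0 := by
    intro i
    rcases le_total (x i) c with h | h
    · have hwi : w i = 0 := max_eq_right (sub_nonpos.mpr h)
      rw [hwi, zero_mul]
    · have hui : u i = 0 := max_eq_right (sub_nonpos.mpr h)
      rw [hui, mul_zero]
  have hwt : w t = 0 := by
    have : w t = max (x t - c) 0 := rfl
    rw [this, hc, sub_self, max_self]
  have hdecomp : x = (fun _ => c) + w - u := by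
    funext i
    show x i = c + w i - u i
    rcases le_total (x i) c with h | h
    · rw [show w i = max (x i - c) 0 from rfl, show u i = max (c - x i) 0 from rfl,
        max_eq_right (sub_nonpos.mpr h), max_eq_left (sub_nonneg.mpr h)]
      ring
    · rw [show w i = max (x i - c) 0 from rfl, show u i = max (c - x i) 0 from rfl,
        max_eq_left (sub_nonneg.mpr h), max_eq_right (sub_nonpos.mpr h)]
      ring
  have h1 : w ⬝ᵥ (A *ᵥ x) = 0 := by
    rw [hx]
    simp [dotProduct, Pi.single_apply, mul_ite, Finset.sum_ite_eq', hwt]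
  have h2 : 0 ≤ w ⬝ᵥ (A *ᵥ fun _ => c) := by
    rw [dotProduct]
    refine Finset.sum_nonneg fun i _ => ?_
    have hi : (A *ᵥ fun _ => c) i = (∑ j, A i j) * c := by
      rw [mulVec, dotProduct, Finset.sum_mul]
    rw [hi]
    exact mul_nonneg (hwnn i) (mul_nonneg (hrow i) hxt)
  have h3 : w ⬝ᵥ (A *ᵥ u) ≤ 0 := by
    rw [dotProduct]
    refine Finset.sum_nonpos fun i _ => ?_
    rw [mulVec, dotProduct, Finset.mul_sum]
    refine Finset.sum_nonpos fun j _ => ?_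
    by_cases hij : i = j
    · subst hij
      rw [show w i * (A i i * u i) = A i i * (w i * u i) from by ring, hwu i, mul_zero]
    · rw [show w i * (A i j * u j) = A i j * (w i * u j) from by ring]
      exact mul_nonpos_iff.mpr (Or.inr ⟨hoff i j hij, mul_nonneg (hwnn i) (hunn j)⟩)
  have h4 : w ⬝ᵥ (A *ᵥ x)
      = w ⬝ᵥ (A *ᵥ fun _ => c) + w ⬝ᵥ (A *ᵥ w) - w ⬝ᵥ (A *ᵥ u) := by
    rw [hdecomp, mulVec_sub, mulVec_add, dotProduct_sub, dotProduct_add]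
  have hwAw : w ⬝ᵥ (A *ᵥ w) ≤ 0 := by linarith
  have hw0 : w = 0 := by
    by_contra h
    have := hPD.dotProduct_mulVec_pos h
    rw [star_trivial] at this
    linarith
  intro i
  have hwi : w i = 0 := by rw [hw0]; rfl
  have hle : max (x i - c) 0 = 0 := hwi
  have := le_max_left (x i - c) 0
  linarith [hle ▸ this]

end aux

/-- All entries of `L_v⁻¹` are nonnegative, and each entry is dominated by the
corresponding diagonal entries: `(L_v⁻¹)_{st} ≤ min((L_v⁻¹)_{ss}, (L_v⁻¹)_{tt})`. -/
theorem grounded_inverse_nonneg_diag_dominant {n : ℕ} (G : SimpleGraph (Fin n))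
    [DecidableRel G.Adj] (hG : G.Connected) (v : Fin n) :
    let N : Matrix {i : Fin n // i ≠ v} {i : Fin n // i ≠ v} ℝ :=
      ((G.lapMatrix ℝ).submatrix Subtype.val Subtype.val)⁻¹
    ∀ s t, 0 ≤ N s t ∧ N s t ≤ min (N s s) (N t t) := by
  classical
  intro N s t
  set L : Matrix (Fin n) (Fin n) ℝ := G.lapMatrix ℝ with hL
  set A : Matrix {i : Fin n // i ≠ v} {i : Fin n // i ≠ v} ℝ :=
    L.submatrix Subtype.val Subtype.val with hA
  -- Basic entry facts about the Laplacian
  have hLoff : ∀ i j : Fin n, i ≠ j → L i j ≤ 0 := by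
    intro i j hij
    simp only [hL, SimpleGraph.lapMatrix, Matrix.sub_apply, SimpleGraph.degMatrix,
      Matrix.diagonal_apply_ne _ hij, SimpleGraph.adjMatrix_apply]
    split <;> norm_num
  have hLrow : ∀ i : Fin n, ∑ j, L i j = 0 := by
    intro i
    have := congrFun (G.lapMatrix_mulVec_const_eq_zero (R := ℝ)) i
    simpa [mulVec, dotProduct] using this
  have hLsym : Lᵀ = L := G.isSymm_lapMatrix (R := ℝ)
  -- off-diagonal entries of A are nonpositive
  have hoff : ∀ i j : {i : Fin n // i ≠ v}, i ≠ j → A i j ≤ 0 := by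
    intro i j hij
    exact hLoff i.val j.val (fun h => hij (Subtype.ext h))
  -- row sums of A are nonnegative
  have hrow : ∀ i : {i : Fin n // i ≠ v}, 0 ≤ ∑ j, A i j := by
    intro i
    have : ∑ j : {i : Fin n // i ≠ v}, L i.val j.val = (∑ j, L i.val j) - L i.val v :=
      sum_subtype_ne v (fun j => L i.val j)
    rw [show (∑ j, A i j) = ∑ j : {i : Fin n // i ≠ v}, L i.val j.val from rfl, this,
      hLrow i.val]
    have := hLoff i.val v i.prop
    linarith
  -- A is positive definite
  have hPD : A.PosDef := by
    refine Matrix.PosDef.of_dotProduct_mulVec_pos ?_ ?_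
    · show Aᴴ = A
      rw [conjTranspose_eq_transpose_of_trivial, hA, transpose_submatrix, hLsym]
    · intro x hx
      rw [star_trivial]
      set X : Fin n → ℝ := fun i => if h : i = v then 0 else x ⟨i, h⟩ with hX
      have hXv : X v = 0 := by simp [hX]
      have hXval : ∀ i : {i : Fin n // i ≠ v}, X i.val = x i := by
        intro i; simp [hX, i.prop]
      have hEq : x ⬝ᵥ (A *ᵥ x) = X ⬝ᵥ (L *ᵥ X) := by
        rw [dotProduct, dotProduct]
        have inner_eq : ∀ i : Fin n, (A *ᵥ x) = fun k : {i : Fin n // i ≠ v} =>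
            (L *ᵥ X) k.val := by
          intro _
          funext k
          rw [mulVec, mulVec, dotProduct, dotProduct]
          have h1 : ∑ j : {i : Fin n // i ≠ v}, L k.val j.val * X j.val
              = (∑ j, L k.val j * X j) - L k.val v * X v :=
            sum_subtype_ne v (fun j => L k.val j * X j)
          rw [hXv] at h1
          simp only [mul_zero, sub_zero] at h1
          calc ∑ j : {i : Fin n // i ≠ v}, A k j * x j
              = ∑ j : {i : Fin n // i ≠ v}, L k.val j.val * X j.val := by
                refine Finset.sum_congr rfl fun j _ => ?_
                rw [hXval j]; rfl
            _ = ∑ j, L k.val j * X j := h1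
        rw [show (∑ i : {i : Fin n // i ≠ v}, x i * (A *ᵥ x) i)
            = ∑ i : {i : Fin n // i ≠ v}, X i.val * (L *ᵥ X) i.val from by
          refine Finset.sum_congr rfl fun i _ => ?_
          rw [hXval i, inner_eq i]]
        have h2 : ∑ i : {i : Fin n // i ≠ v}, X i.val * (L *ᵥ X) i.val
            = (∑ i, X i * (L *ᵥ X) i) - X v * (L *ᵥ X) v :=
          sum_subtype_ne v (fun i => X i * (L *ᵥ X) i)
        rw [h2, hXv]
        ring
      rw [hEq]
      have hPSD := SimpleGraph.posSemidef_lapMatrix ℝ G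
      have hge : 0 ≤ X ⬝ᵥ (L *ᵥ X) := by
        have := hPSD.dotProduct_mulVec_nonneg X
        rwa [star_trivial] at this
      rcases lt_or_eq_of_le hge with h | h
      · exact h
      · exfalso
        have hform : Matrix.toLinearMap₂' ℝ (G.lapMatrix ℝ) X X = 0 := by
          rw [Matrix.toLinearMap₂'_apply']
          exact h.symm
        rw [SimpleGraph.lapMatrix_toLinearMap₂'_apply'_eq_zero_iff_forall_reachable]
          at hform
        apply hx
        funext i
        simp only [Pi.zero_apply]
        rw [← hXval i, hform i.val v (hG.preconnected i.val v), hXv]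
  have hdet : IsUnit A.det := isUnit_iff_ne_zero.mpr (ne_of_gt hPD.det_pos)
  have hmul : A * A⁻¹ = 1 := mul_nonsing_inv A hdet
  -- columns of N solve A x = e_t
  have hcol : ∀ c : {i : Fin n // i ≠ v}, A *ᵥ (fun i => N i c) = Pi.single c 1 := by
    intro c
    funext j
    have := congrFun (congrFun hmul j) c
    simp only [Matrix.mul_apply, Matrix.one_apply] at this
    rw [mulVec, dotProduct]
    rw [show (∑ k, A j k * N k c) = (A * A⁻¹) j c from by rw [Matrix.mul_apply]]
    rw [hmul, Matrix.one_apply, Pi.single_apply]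
  -- N is symmetric
  have hNsym : ∀ a b, N a b = N b a := by
    intro a b
    have hAsym : Aᵀ = A := by rw [hA, transpose_submatrix, hLsym]
    have : Nᵀ = N := by
      show (A⁻¹)ᵀ = A⁻¹
      rw [transpose_nonsing_inv, hAsym]
    have h2 := congrFun (congrFun this b) a
    rw [Matrix.transpose_apply] at h2
    exact h2
  -- apply the Stieltjes lemmas
  have key : ∀ a c : {i : Fin n // i ≠ v}, 0 ≤ N a c ∧ N a c ≤ N c c := by
    intro a c
    have hnn := stieltjes_col_nonneg hPD hoff (hcol c)
    have hle := stieltjes_col_le_diag hPD hoff hrow (hcol c) (hnn c)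
    exact ⟨hnn a, hle a⟩
  refine ⟨(key s t).1, le_min ?_ (key s t).2⟩
  rw [hNsym s t]
  exact (key t s).2
end
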